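/- Let d, k, m, n be integers with 1 < d < m ≤ n, m = dk, and n < m + k − 1. Then there exists a continuous function μ : [0,1] → ℂ such that μ(0) = e^{2πi/k}, μ(1) = e^{2πi d/(m−1)}, (μ(γ)^k − (1−γ))^d = γ^d μ(γ) for every γ ∈ [0,1], and for every γ ∈ [0,1] the point μ(γ) is nonzero and has an argument θ(γ) (i.e., μ(γ) = |μ(γ)| e^{iθ(γ)}) satisfying 2π/k ≤ θ(γ) ≤ 2π·d/(m−1). -/

import Mathlib

open Complex Set

namespace PowerArcAux

noncomputable def b1 (m : ℕ) : ℝ := 2 * Real.pi / m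
noncomputable def b2 (m : ℕ) : ℝ := 2 * Real.pi / ((m : ℝ) - 1)
noncomputable def al (m : ℕ) : ℝ := (b1 m + b2 m) / 2

def D (m : ℕ) : Set ℂ :=
  {s : ℂ | 0 ≤ s.im ∧ 0 ≤ (Complex.exp (-(b1 m : ℂ) * Complex.I) * s).im ∧
    (Complex.exp (-(b2 m : ℂ) * Complex.I) * s).im ≤ 0 ∧
    (1/2 : ℝ) ≤ (Complex.exp (-(al m : ℂ) * Complex.I) * s).re ∧ ‖s‖ ≤ 1}

noncomputable def T (m : ℕ) (γ : ℝ) (s : ℂ) : ℂ :=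
  Complex.exp ((b1 m : ℂ) * Complex.I + Complex.log (1 + (γ : ℂ) * (s - 1)) / (m : ℂ))

variable {m : ℕ} {s : ℂ} {γ : ℝ}

lemma four_le (hm : 4 ≤ m) : (4:ℝ) ≤ (m:ℝ) := by exact_mod_cast hm

lemma b1_pos (hm : 4 ≤ m) : 0 < b1 m := by
  have := four_le hm
  have := Real.pi_pos
  apply div_pos <;> linarith

lemma b1_le (hm : 4 ≤ m) : b1 m ≤ Real.pi / 2 := by
  have hM := four_le hm
  have := Real.pi_pos
  rw [b1, div_le_div_iff₀ (by linarith) (by norm_num)]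
  nlinarith

lemma b2_pos (hm : 4 ≤ m) : 0 < b2 m := by
  have := four_le hm
  have := Real.pi_pos
  apply div_pos <;> linarith

lemma b2_le (hm : 4 ≤ m) : b2 m ≤ 2 * Real.pi / 3 := by
  have hM := four_le hm
  have := Real.pi_pos
  rw [b2, div_le_div_iff₀ (by linarith) (by norm_num)]
  nlinarith

lemma b1_lt_b2 (hm : 4 ≤ m) : b1 m < b2 m := by
  have hM := four_le hm
  have := Real.pi_pos
  rw [b1, b2, div_lt_div_iff₀ (by linarith) (by linarith)]
  nlinarith

lemma gap_le (hm : 4 ≤ m) : b2 m - b1 m ≤ Real.pi / 6 := by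
  have hM := four_le hm
  have := Real.pi_pos
  have h0 : (m:ℝ) ≠ 0 := by linarith
  have h1 : (m:ℝ) - 1 ≠ 0 := by linarith
  have hprod : (0:ℝ) < (m:ℝ) * ((m:ℝ) - 1) := by nlinarith
  have e : b2 m - b1 m = 2 * Real.pi / ((m:ℝ) * ((m:ℝ) - 1)) := by
    rw [b1, b2, eq_div_iff hprod.ne']
    field_simp
    ring
  have h12 : (12:ℝ) ≤ (m:ℝ) * ((m:ℝ) - 1) := by nlinarith
  rw [e, div_le_div_iff₀ hprod (by norm_num)]
  nlinarith [mul_le_mul_of_nonneg_left h12 Real.pi_pos.le]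

lemma b_identity (hm : 4 ≤ m) : b1 m + b2 m / m = b2 m := by
  have hM := four_le hm
  have h0 : (m:ℝ) ≠ 0 := by linarith
  have h1 : (m:ℝ) - 1 ≠ 0 := by linarith
  rw [b1, b2]
  field_simp
  ring

lemma exp_neg_im (θ : ℝ) : (Complex.exp (-(θ:ℂ) * Complex.I)).im = -Real.sin θ := by
  rw [show -(θ:ℂ) * Complex.I = ((-θ:ℝ):ℂ) * Complex.I by push_cast; ring,
    Complex.exp_ofReal_mul_I_im, Real.sin_neg]

lemma mul_exp_im (θ : ℝ) (u : ℂ) :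
    (Complex.exp (-(θ:ℂ) * Complex.I) * u).im = ‖u‖ * Real.sin (u.arg - θ) := by
  conv_lhs => rw [← Complex.norm_mul_exp_arg_mul_I u]
  have h1 : Complex.exp (-(θ:ℂ) * I) * ((‖u‖ : ℂ) * Complex.exp (u.arg * I))
      = (‖u‖ : ℂ) * Complex.exp (((u.arg - θ : ℝ) : ℂ) * I) := by
    rw [mul_left_comm, ← Complex.exp_add]
    congr 2
    push_cast
    ring
  rw [h1, Complex.im_ofReal_mul, Complex.exp_ofReal_mul_I_im]

lemma mul_exp_re (θ : ℝ) (u : ℂ) :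
    (Complex.exp (-(θ:ℂ) * Complex.I) * u).re = ‖u‖ * Real.cos (u.arg - θ) := by
  conv_lhs => rw [← Complex.norm_mul_exp_arg_mul_I u]
  have h1 : Complex.exp (-(θ:ℂ) * I) * ((‖u‖ : ℂ) * Complex.exp (u.arg * I))
      = (‖u‖ : ℂ) * Complex.exp (((u.arg - θ : ℝ) : ℂ) * I) := by
    rw [mul_left_comm, ← Complex.exp_add]
    congr 2
    push_cast
    ring
  rw [h1, Complex.re_ofReal_mul, Complex.exp_ofReal_mul_I_re]

lemma abs_mul_exp_eq (θ : ℝ) (u : ℂ) :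
    ‖Complex.exp (-(θ:ℂ) * Complex.I) * u‖ = ‖u‖ := by
  rw [norm_mul, Complex.norm_exp]
  simp

lemma half_le_abs_of_mem (hs : s ∈ D m) : 1/2 ≤ ‖s‖ := by
  have h4 := hs.2.2.2.1
  have h5 : (Complex.exp (-(al m:ℂ) * Complex.I) * s).re ≤ ‖s‖ := by
    calc (Complex.exp (-(al m:ℂ) * Complex.I) * s).re
        ≤ ‖Complex.exp (-(al m:ℂ) * Complex.I) * s‖ := Complex.re_le_norm _
      _ = ‖s‖ := abs_mul_exp_eq _ _
  linarith

lemma ne_zero_of_mem (hs : s ∈ D m) : s ≠ 0 := by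
  intro h
  have := half_le_abs_of_mem hs
  rw [h] at this
  simp at this
  norm_num at this

lemma im_eq_abs_mul_sin {u : ℂ} (hu : u ≠ 0) : u.im = ‖u‖ * Real.sin u.arg := by
  rw [Complex.sin_arg, mul_comm, div_mul_cancel₀ _ (norm_ne_zero_iff.mpr hu)]

lemma re_eq_abs_mul_cos {u : ℂ} (hu : u ≠ 0) : u.re = ‖u‖ * Real.cos u.arg := by
  rw [Complex.cos_arg hu, mul_comm, div_mul_cancel₀ _ (norm_ne_zero_iff.mpr hu)]

lemma im_pos_of_mem (hm : 4 ≤ m) (hs : s ∈ D m) : 0 < s.im := by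
  have hpi := Real.pi_pos
  rcases hs.1.lt_or_eq with h | him
  · exact h
  · exfalso
    have hb1 : 0 < Real.sin (b1 m) :=
      Real.sin_pos_of_pos_of_lt_pi (b1_pos hm) (by linarith [b1_le hm])
    have hb2 : 0 < Real.sin (b2 m) :=
      Real.sin_pos_of_pos_of_lt_pi (b2_pos hm) (by linarith [b2_le hm])
    have e1 : (Complex.exp (-(b1 m:ℂ) * Complex.I) * s).im = -(Real.sin (b1 m) * s.re) := by
      rw [Complex.mul_im, exp_neg_im, ← him]
      ring
    have e2 : (Complex.exp (-(b2 m:ℂ) * Complex.I) * s).im = -(Real.sin (b2 m) * s.re) := by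
      rw [Complex.mul_im, exp_neg_im, ← him]
      ring
    have h1 := hs.2.1
    have h2 := hs.2.2.1
    rw [e1] at h1
    rw [e2] at h2
    have hre1 : s.re ≤ 0 := by nlinarith
    have hre2 : 0 ≤ s.re := by nlinarith
    have : s = 0 := Complex.ext (le_antisymm hre1 hre2) him.symm
    exact ne_zero_of_mem hs this

lemma arg_pos_of_mem (hm : 4 ≤ m) (hs : s ∈ D m) : 0 < s.arg := by
  have him := im_pos_of_mem hm hs
  rcases (Complex.arg_nonneg_iff.mpr him.le).lt_or_eq with h | h
  · exact h
  · exfalso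
    have := (Complex.arg_eq_zero_iff.mp h.symm).2
    linarith

lemma arg_lt_pi_of_mem (hm : 4 ≤ m) (hs : s ∈ D m) : s.arg < Real.pi := by
  have him := im_pos_of_mem hm hs
  rcases (Complex.arg_le_pi s).lt_or_eq with h | h
  · exact h
  · exfalso
    have := (Complex.arg_eq_pi_iff.mp h).2
    linarith

lemma arg_mem_of_mem (hm : 4 ≤ m) (hs : s ∈ D m) : b1 m ≤ s.arg ∧ s.arg ≤ b2 m := by
  have hpi := Real.pi_pos
  have h0 := arg_pos_of_mem hm hs
  have hltpi := arg_lt_pi_of_mem hm hs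
  have habs : 0 < ‖s‖ := lt_of_lt_of_le (by norm_num) (half_le_abs_of_mem hs)
  constructor
  · by_contra hlt
    push_neg at hlt
    have h1 := hs.2.1
    rw [mul_exp_im] at h1
    have hsin : Real.sin (s.arg - b1 m) < 0 :=
      Real.sin_neg_of_neg_of_neg_pi_lt (by linarith) (by linarith [b1_le hm])
    nlinarith
  · by_contra hgt
    push_neg at hgt
    have h1 := hs.2.2.1
    rw [mul_exp_im] at h1
    have hsin : 0 < Real.sin (s.arg - b2 m) :=
      Real.sin_pos_of_pos_of_lt_pi (by linarith) (by linarith [b2_pos hm])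
    nlinarith




variable {m : ℕ} {s : ℂ} {γ : ℝ}

lemma D_closed (m : ℕ) : IsClosed (D m) := by
  have h1 : IsClosed {s : ℂ | 0 ≤ s.im} := isClosed_le continuous_const Complex.continuous_im
  have h2 : IsClosed {s : ℂ | 0 ≤ (Complex.exp (-(b1 m:ℂ) * Complex.I) * s).im} :=
    isClosed_le continuous_const (Complex.continuous_im.comp (continuous_const.mul continuous_id))
  have h3 : IsClosed {s : ℂ | (Complex.exp (-(b2 m:ℂ) * Complex.I) * s).im ≤ 0} :=
    isClosed_le (Complex.continuous_im.comp (continuous_const.mul continuous_id)) continuous_const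
  have h4 : IsClosed {s : ℂ | (1/2:ℝ) ≤ (Complex.exp (-(al m:ℂ) * Complex.I) * s).re} :=
    isClosed_le continuous_const (Complex.continuous_re.comp (continuous_const.mul continuous_id))
  have h5 : IsClosed {s : ℂ | ‖s‖ ≤ 1} :=
    isClosed_le continuous_norm continuous_const
  exact h1.inter (h2.inter (h3.inter (h4.inter h5)))

lemma D_convex (m : ℕ) : Convex ℝ (D m) := by
  intro x hx y hy a b ha hb hab
  have eim : ∀ c : ℂ, (c * (a • x + b • y)).im = a * (c * x).im + b * (c * y).im := by
    intro c
    simp [mul_add, mul_smul_comm, Complex.smul_im]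
    ring
  have ere : ∀ c : ℂ, (c * (a • x + b • y)).re = a * (c * x).re + b * (c * y).re := by
    intro c
    simp [mul_add, mul_smul_comm, Complex.smul_re]
    ring
  refine ⟨?_, ?_, ?_, ?_, ?_⟩
  · simp only [Complex.add_im, Complex.smul_im]
    have := hx.1; have := hy.1
    positivity
  · rw [eim]
    have := hx.2.1; have := hy.2.1
    positivity
  · rw [eim]
    have h1 := hx.2.2.1; have h2 := hy.2.2.1
    nlinarith
  · rw [ere]
    have h1 := hx.2.2.2.1; have h2 := hy.2.2.2.1
    nlinarith
  · calc ‖a • x + b • y‖ ≤ ‖a • x‖ + ‖b • y‖ :=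
        norm_add_le _ _
      _ = a * ‖x‖ + b * ‖y‖ := by
          rw [Complex.real_smul, Complex.real_smul, norm_mul, norm_mul, Complex.norm_real, Real.norm_eq_abs,
            Complex.norm_real, Real.norm_eq_abs, _root_.abs_of_nonneg ha, _root_.abs_of_nonneg hb]
      _ ≤ a * 1 + b * 1 := by
          have := hx.2.2.2.2; have := hy.2.2.2.2
          gcongr
      _ = 1 := by linarith

lemma key1_aux (r i A γ : ℝ) (h1 : -(A/2) ≤ r) (h3 : r^2 + i^2 = A^2)
    (h4 : 1/2 ≤ A) (h5 : A ≤ 1) (h6 : 0 ≤ γ) (h7 : γ ≤ 1) :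
    (1/4:ℝ)^2 ≤ (1 - γ + γ*r)^2 + (γ*i)^2 := by
  nlinarith [mul_nonneg (mul_nonneg (by linarith : (0:ℝ) ≤ 1 - γ) h6)
      (by linarith : (0:ℝ) ≤ 2*r + A),
    sq_nonneg ((1-γ) - γ*A), sq_nonneg (γ*i), sq_nonneg (2 - γ),
    mul_le_mul_of_nonneg_left h4 h6]

lemma key2_aux (r i A γ : ℝ) (h1 : -(A/2) ≤ r) (h3 : r^2 + i^2 = A^2)
    (h4 : 1/2 ≤ A) (h5 : A ≤ 1) (h6 : 0 ≤ γ) (h7 : γ ≤ 1) :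
    3/16 * γ^2 ≤ (1 - γ + γ*r)^2 + (γ*i)^2 := by
  nlinarith [mul_nonneg (mul_nonneg (by linarith : (0:ℝ) ≤ 1 - γ) h6)
      (by linarith : (0:ℝ) ≤ 2*r + A),
    sq_nonneg ((1-γ) - γ*A/2), sq_nonneg (γ*i),
    mul_self_le_mul_self (by positivity) (mul_le_mul_of_nonneg_left h4 h6)]

set_option maxHeartbeats 1000000 in
lemma z_facts (hm : 4 ≤ m) (hγ : γ ∈ Icc (0:ℝ) 1) (hs : s ∈ D m) :
    (1 + (γ:ℂ) * (s - 1)) ≠ 0 ∧ (1 + (γ:ℂ) * (s - 1)) ∈ Complex.slitPlane ∧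
    ‖1 + (γ:ℂ) * (s - 1)‖ ≤ 1 ∧ 1/4 ≤ ‖1 + (γ:ℂ) * (s - 1)‖ ∧
    3/16 * γ^2 ≤ ‖1 + (γ:ℂ) * (s - 1)‖^2 ∧
    0 ≤ (1 + (γ:ℂ) * (s - 1)).arg ∧ (1 + (γ:ℂ) * (s - 1)).arg ≤ b2 m := by
  obtain ⟨hγ0, hγ1⟩ := hγ
  have hpi := Real.pi_pos
  have hzre : (1 + (γ:ℂ) * (s - 1)).re = 1 - γ + γ * s.re := by
    simp [Complex.add_re, Complex.mul_re, Complex.sub_re, Complex.sub_im]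
    ring
  have hzim : (1 + (γ:ℂ) * (s - 1)).im = γ * s.im := by
    simp [Complex.add_im, Complex.mul_im, Complex.sub_re, Complex.sub_im]
  have hA1 := half_le_abs_of_mem hs
  have hA2 := hs.2.2.2.2
  have hsne := ne_zero_of_mem hs
  have him := im_pos_of_mem hm hs
  have harg := arg_mem_of_mem hm hs
  have hAnn := norm_nonneg s
  have hreL : -(‖s‖ / 2) ≤ s.re := by
    have hre := re_eq_abs_mul_cos hsne
    have h23 : Real.cos (2 * Real.pi / 3) = -(1/2) := by
      rw [show 2 * Real.pi / 3 = Real.pi - Real.pi / 3 by ring, Real.cos_pi_sub,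
        Real.cos_pi_div_three]
    have hcos : -(1/2:ℝ) ≤ Real.cos s.arg := by
      have h := Real.cos_le_cos_of_nonneg_of_le_pi (arg_pos_of_mem hm hs).le
        (by linarith : 2 * Real.pi / 3 ≤ Real.pi)
        (le_trans harg.2 (b2_le hm))
      rw [h23] at h
      exact h
    nlinarith
  have hsq : s.re^2 + s.im^2 = ‖s‖^2 := by
    rw [Complex.sq_norm, Complex.normSq_apply]
    ring
  have hre_le : s.re ≤ ‖s‖ := Complex.re_le_norm s
  have habs2 : ‖1 + (γ:ℂ) * (s - 1)‖^2
      = (1 - γ + γ * s.re)^2 + (γ * s.im)^2 := by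
    rw [Complex.sq_norm, Complex.normSq_apply, hzre, hzim]
    ring
  have hcA : γ * (1/2) ≤ γ * ‖s‖ := mul_le_mul_of_nonneg_left hA1 hγ0
  have key1 : (1/4:ℝ)^2 ≤ ‖1 + (γ:ℂ) * (s - 1)‖^2 := by
    rw [habs2]
    exact key1_aux s.re s.im (‖s‖) γ hreL hsq hA1 hA2 hγ0 hγ1
  have key2 : 3/16 * γ^2 ≤ ‖1 + (γ:ℂ) * (s - 1)‖^2 := by
    rw [habs2]
    exact key2_aux s.re s.im (‖s‖) γ hreL hsq hA1 hA2 hγ0 hγ1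
  have habsle : ‖1 + (γ:ℂ) * (s - 1)‖ ≤ 1 := by
    have e : (1:ℂ) + (γ:ℂ) * (s - 1) = ((1 - γ : ℝ):ℂ) + (γ:ℂ) * s := by push_cast; ring
    rw [e]
    refine le_trans (norm_add_le _ _) ?_
    rw [norm_mul, Complex.norm_real, Real.norm_eq_abs, Complex.norm_real, Real.norm_eq_abs, _root_.abs_of_nonneg hγ0,
      _root_.abs_of_nonneg (by linarith : (0:ℝ) ≤ 1 - γ)]
    have hmul : γ * ‖s‖ ≤ γ * 1 := mul_le_mul_of_nonneg_left hA2 hγ0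
    linarith
  have hq : 1/4 ≤ ‖1 + (γ:ℂ) * (s - 1)‖ := by
    nlinarith [key1, norm_nonneg (1 + (γ:ℂ) * (s - 1))]
  have hz0 : (1 + (γ:ℂ) * (s - 1)) ≠ 0 := by
    intro h
    rw [h] at hq
    simp at hq
    norm_num at hq
  have hslit : (1 + (γ:ℂ) * (s - 1)) ∈ Complex.slitPlane := by
    rcases hγ0.lt_or_eq with h | h
    · right
      rw [hzim]
      exact ne_of_gt (mul_pos h him)
    · left
      rw [hzre, ← h]
      norm_num
  have harg0 : 0 ≤ (1 + (γ:ℂ) * (s - 1)).arg :=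
    Complex.arg_nonneg_iff.mpr (by rw [hzim]; exact mul_nonneg hγ0 him.le)
  have hargle : (1 + (γ:ℂ) * (s - 1)).arg ≤ b2 m := by
    rcases hγ0.lt_or_eq with h | h
    · have himz : 0 < (1 + (γ:ℂ) * (s - 1)).im := by
        rw [hzim]; exact mul_pos h him
      have hzpi : (1 + (γ:ℂ) * (s - 1)).arg < Real.pi := by
        rcases (Complex.arg_le_pi _).lt_or_eq with h' | h'
        · exact h'
        · exfalso
          have := (Complex.arg_eq_pi_iff.mp h').2
          linarith
      have hsin2 : 0 < Real.sin (b2 m) :=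
        Real.sin_pos_of_pos_of_lt_pi (b2_pos hm) (by linarith [b2_le hm])
      have hlin : (Complex.exp (-(b2 m:ℂ) * Complex.I) * (1 + (γ:ℂ) * (s - 1))).im ≤ 0 := by
        have hexpand : Complex.exp (-(b2 m:ℂ) * Complex.I) * (1 + (γ:ℂ) * (s - 1))
            = ((1 - γ : ℝ):ℂ) * Complex.exp (-(b2 m:ℂ) * Complex.I)
              + (γ:ℂ) * (Complex.exp (-(b2 m:ℂ) * Complex.I) * s) := by
          push_cast
          ring
        rw [hexpand, Complex.add_im, Complex.im_ofReal_mul, Complex.im_ofReal_mul, exp_neg_im]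
        have h1 := hs.2.2.1
        have t1 := mul_nonpos_of_nonneg_of_nonpos hγ0 h1
        have t2 := mul_nonneg (by linarith : (0:ℝ) ≤ 1 - γ) hsin2.le
        linarith
      rw [mul_exp_im] at hlin
      by_contra hgt
      push_neg at hgt
      have hspos : 0 < Real.sin ((1 + (γ:ℂ) * (s - 1)).arg - b2 m) :=
        Real.sin_pos_of_pos_of_lt_pi (by linarith) (by linarith [b2_pos hm])
      have hzq : (0:ℝ) < ‖1 + (γ:ℂ) * (s - 1)‖ := by linarith
      nlinarith [mul_pos hzq hspos]
    · have e : (1:ℂ) + (γ:ℂ) * (s - 1) = 1 := by rw [← h]; simp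
      rw [e, Complex.arg_one]
      exact (b2_pos hm).le
  exact ⟨hz0, hslit, habsle, hq, key2, harg0, hargle⟩

lemma ofReal_mul_I_im' (x : ℝ) : ((x:ℂ) * Complex.I).im = x := by simp

lemma ofReal_mul_I_re' (x : ℝ) : ((x:ℂ) * Complex.I).re = 0 := by simp

lemma one_le_sqrt_two : (1:ℝ) ≤ Real.sqrt 2 := by
  nlinarith [Real.sq_sqrt (show (0:ℝ) ≤ 2 by norm_num), Real.sqrt_nonneg 2]

lemma cos_al_bound (hm : 4 ≤ m) {x : ℝ} (h1 : b1 m ≤ x) (h2 : x ≤ b2 m) :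
    Real.sqrt 2 / 2 ≤ Real.cos (x - al m) := by
  have hpi := Real.pi_pos
  have hgap := gap_le hm
  have hal : al m = (b1 m + b2 m) / 2 := rfl
  have hb : |x - al m| ≤ Real.pi / 12 := by
    rw [abs_le]
    constructor
    · linarith [hal]
    · linarith [hal]
  have h := Real.cos_le_cos_of_nonneg_of_le_pi (abs_nonneg (x - al m))
    (show Real.pi / 4 ≤ Real.pi by linarith) (show |x - al m| ≤ Real.pi / 4 by linarith)
  rw [Real.cos_abs, Real.cos_pi_div_four] at h
  exact h

lemma mem_D_of (hm : 4 ≤ m) {u : ℂ} (hne : u ≠ 0) (habs1 : ‖u‖ ≤ 1)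
    (h1 : b1 m ≤ u.arg) (h2 : u.arg ≤ b2 m)
    (hre : (1/2:ℝ) ≤ (Complex.exp (-(al m:ℂ) * Complex.I) * u).re) : u ∈ D m := by
  have hpi := Real.pi_pos
  have hb1 := b1_pos hm
  have hb2 := b2_le hm
  have hgap := gap_le hm
  have habs0 := norm_nonneg u
  refine ⟨?_, ?_, ?_, hre, habs1⟩
  · rw [im_eq_abs_mul_sin hne]
    exact mul_nonneg habs0 (Real.sin_nonneg_of_nonneg_of_le_pi (by linarith) (by linarith))
  · rw [mul_exp_im]
    exact mul_nonneg habs0 (Real.sin_nonneg_of_nonneg_of_le_pi (by linarith) (by linarith))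
  · rw [mul_exp_im]
    exact mul_nonpos_of_nonneg_of_nonpos habs0
      (Real.sin_nonpos_of_nonpos_of_neg_pi_le (by linarith) (by linarith))

lemma arg_exp_eq (hm : 4 ≤ m) {β : ℝ} (h1 : b1 m ≤ β) (h2 : β ≤ b2 m) :
    (Complex.exp ((β:ℂ) * Complex.I)).arg = β := by
  have hpi := Real.pi_pos
  have hb1 := b1_pos hm
  have hb2 := b2_le hm
  have hlog : Complex.log (Complex.exp ((β:ℂ) * Complex.I)) = (β:ℂ) * Complex.I := by
    apply Complex.log_exp
    · rw [ofReal_mul_I_im']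
      linarith
    · rw [ofReal_mul_I_im']
      linarith
  rw [← Complex.log_im, hlog]
  simp

lemma exp_mem (hm : 4 ≤ m) {β : ℝ} (h1 : b1 m ≤ β) (h2 : β ≤ b2 m) :
    Complex.exp ((β:ℂ) * Complex.I) ∈ D m := by
  have hpi := Real.pi_pos
  have hb1 := b1_pos hm
  have hb2 := b2_le hm
  have hgap := gap_le hm
  have habs : ‖Complex.exp ((β:ℂ) * Complex.I)‖ = 1 := by
    rw [Complex.norm_exp]
    simp
  have harg := arg_exp_eq hm h1 h2
  apply mem_D_of hm (Complex.exp_ne_zero _) (le_of_eq habs) (by rw [harg]; exact h1)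
    (by rw [harg]; exact h2)
  rw [mul_exp_re, habs, harg, one_mul]
  have hcos := cos_al_bound hm h1 h2
  have h12 := one_le_sqrt_two
  linarith

set_option maxHeartbeats 1000000 in
lemma T_mem (hm : 4 ≤ m) (hγ : γ ∈ Icc (0:ℝ) 1) (hs : s ∈ D m) : T m γ s ∈ D m := by
  obtain ⟨hz0, hslit, habsle, hq, key2, harg0, hargle⟩ := z_facts hm hγ hs
  have hpi := Real.pi_pos
  have hb1 := b1_pos hm
  have hb2 := b2_le hm
  have hgap := gap_le hm
  have hM := four_le hm
  have hMpos : (0:ℝ) < m := by linarith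
  set ζ : ℂ := (b1 m : ℂ) * Complex.I + Complex.log (1 + (γ:ℂ) * (s - 1)) / (m : ℂ) with hζ
  have hTexp : T m γ s = Complex.exp ζ := rfl
  have hζim : ζ.im = b1 m + (1 + (γ:ℂ) * (s - 1)).arg / m := by
    rw [hζ, Complex.add_im, show ((m:ℂ)) = ((m:ℝ):ℂ) by norm_cast, Complex.div_ofReal_im,
      Complex.log_im, ofReal_mul_I_im']
  have hζre : ζ.re = Real.log (‖1 + (γ:ℂ) * (s - 1)‖) / m := by
    rw [hζ, Complex.add_re, show ((m:ℂ)) = ((m:ℝ):ℂ) by norm_cast, Complex.div_ofReal_re,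
      Complex.log_re, ofReal_mul_I_re', zero_add]
  have hid := b_identity hm
  have hζim1 : b1 m ≤ ζ.im := by
    rw [hζim]
    have : 0 ≤ (1 + (γ:ℂ) * (s - 1)).arg / m := div_nonneg harg0 hMpos.le
    linarith
  have hζim2 : ζ.im ≤ b2 m := by
    rw [hζim, ← hid]
    have : (1 + (γ:ℂ) * (s - 1)).arg / m ≤ b2 m / m := by
      gcongr
    linarith
  have harg : (T m γ s).arg = ζ.im := by
    rw [hTexp, ← Complex.log_im, Complex.log_exp (by linarith) (by linarith)]
  have habsT : ‖T m γ s‖ = Real.exp ζ.re := by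
    rw [hTexp, Complex.norm_exp]
  have habsT1 : ‖T m γ s‖ ≤ 1 := by
    rw [habsT, Real.exp_le_one_iff, hζre]
    exact div_nonpos_of_nonpos_of_nonneg
      (Real.log_nonpos (norm_nonneg _) habsle) hMpos.le
  have hE : Real.exp (Real.log (1/4) / 4) ≤ ‖T m γ s‖ := by
    rw [habsT, Real.exp_le_exp, hζre]
    have l1 : Real.log (1/4) ≤ Real.log (‖1 + (γ:ℂ) * (s - 1)‖) :=
      Real.log_le_log (by norm_num) hq
    have l2 : Real.log (‖1 + (γ:ℂ) * (s - 1)‖) ≤ 0 :=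
      Real.log_nonpos (norm_nonneg _) habsle
    have l3 : Real.log (1/4) < 0 := Real.log_neg (by norm_num) (by norm_num)
    rw [div_le_div_iff₀ (by norm_num) hMpos]
    nlinarith
  apply mem_D_of hm (by rw [hTexp]; exact Complex.exp_ne_zero _) habsT1
    (by rw [harg]; exact hζim1) (by rw [harg]; exact hζim2)
  rw [mul_exp_re]
  -- cos bound
  have hcos : Real.sqrt 2 / 2 ≤ Real.cos ((T m γ s).arg - al m) := by
    have := cos_al_bound hm (show b1 m ≤ (T m γ s).arg by rw [harg]; exact hζim1)
      (show (T m γ s).arg ≤ b2 m by rw [harg]; exact hζim2)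
    exact this
  set E := Real.exp (Real.log (1/4) / 4) with hEdef
  have hEpos : 0 < E := Real.exp_pos _
  have hE4 : E^4 = 1/4 := by
    rw [hEdef, ← Real.exp_nat_mul]
    rw [show (4:ℕ) * (Real.log (1/4) / 4) = Real.log (1/4) by push_cast; ring]
    exact Real.exp_log (by norm_num)
  have hE2 : E^2 = 1/2 := by
    have h := hE4
    have e : (E^2 - 1/2) * (E^2 + 1/2) = E^4 - 1/4 := by ring
    have e2 : (E^2 - 1/2) * (E^2 + 1/2) = 0 := by rw [e, h]; ring
    rcases mul_eq_zero.mp e2 with h' | h'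
    · linarith
    · nlinarith [sq_nonneg E]
  have hs2 : Real.sqrt 2 ^ 2 = 2 := Real.sq_sqrt (by norm_num)
  have hs2pos : 0 < Real.sqrt 2 := Real.sqrt_pos.mpr (by norm_num)
  have hEs : 1 ≤ E * Real.sqrt 2 := by nlinarith [mul_pos hEpos hs2pos]
  have hcosnn : (0:ℝ) ≤ Real.cos ((T m γ s).arg - al m) := by
    have : (0:ℝ) < Real.sqrt 2 / 2 := by positivity
    linarith
  have hmm : E * (Real.sqrt 2 / 2) ≤ ‖T m γ s‖ * Real.cos ((T m γ s).arg - al m) :=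
    mul_le_mul hE hcos (by positivity) (norm_nonneg _)
  nlinarith

lemma T_hasDerivAt (hm : 4 ≤ m) (hγ : γ ∈ Icc (0:ℝ) 1) (hs : s ∈ D m) :
    HasDerivAt (T m γ)
      (T m γ s * ((γ:ℂ) / ((1 + (γ:ℂ) * (s - 1)) * (m:ℂ)))) s := by
  obtain ⟨hz0, hslit, -⟩ := z_facts hm hγ hs
  have h1 : HasDerivAt (fun u : ℂ => 1 + (γ:ℂ) * (u - 1)) (γ:ℂ) s := by
    simpa using (((hasDerivAt_id s).sub_const 1).const_mul (γ:ℂ)).const_add 1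
  have h2 : HasDerivAt (fun u : ℂ => Complex.log (1 + (γ:ℂ) * (u - 1)))
      ((1 + (γ:ℂ) * (s - 1))⁻¹ * (γ:ℂ)) s := by
    exact (Complex.hasDerivAt_log hslit).comp s h1
  have h3 := ((h2.div_const (m:ℂ)).const_add ((b1 m : ℂ) * Complex.I)).cexp
  have hfun : (fun u : ℂ => Complex.exp ((b1 m : ℂ) * Complex.I
      + Complex.log (1 + (γ:ℂ) * (u - 1)) / (m:ℂ))) = T m γ := rfl
  rw [hfun] at h3
  refine h3.congr_deriv (Eq.symm ?_)
  rw [show T m γ s = Complex.exp ((b1 m : ℂ) * Complex.I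
      + Complex.log (1 + (γ:ℂ) * (s - 1)) / (m:ℂ)) from rfl, inv_mul_eq_div, div_div]

lemma norm_T_le_one (hm : 4 ≤ m) (hγ : γ ∈ Icc (0:ℝ) 1) (hs : s ∈ D m) :
    ‖T m γ s‖ ≤ 1 := by
  have := (T_mem hm hγ hs).2.2.2.2
  exact this

lemma T_deriv_bound (hm : 4 ≤ m) (hγ : γ ∈ Icc (0:ℝ) 1) (hs : s ∈ D m) :
    ‖T m γ s * ((γ:ℂ) / ((1 + (γ:ℂ) * (s - 1)) * (m:ℂ)))‖ ≤ 3/5 := by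
  obtain ⟨hz0, hslit, habsle, hq, key2, -⟩ := z_facts hm hγ hs
  have hM := four_le hm
  have hγ0 := hγ.1
  have hT1 := norm_T_le_one hm hγ hs
  rw [norm_mul, norm_div, norm_mul]
  have e1 : ‖(γ:ℂ)‖ = γ := by
    rw [Complex.norm_real, Real.norm_eq_abs, _root_.abs_of_nonneg hγ0]
  have e2 : ‖((m:ℕ):ℂ)‖ = (m:ℝ) := by
    rw [Complex.norm_natCast]
  rw [e1, e2]
  set B := ‖1 + (γ:ℂ) * (s - 1)‖ with hB
  have hBpos : (0:ℝ) < B := by norm_num at hq ⊢; linarith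
  have hmpos : (0:ℝ) < (m:ℝ) := by linarith
  have hquot : γ / (B * m) ≤ 3/5 := by
    rw [div_le_iff₀ (by positivity)]
    have h2 : γ ≤ 12/5 * B := by
      by_contra hc
      push_neg at hc
      have hgpos : 0 < γ := lt_trans (by positivity) hc
      have hsq : (12/5 * B)^2 < γ^2 := by
        nlinarith [mul_pos (sub_pos.mpr hc) (show 0 < γ + 12/5 * B by positivity)]
      nlinarith [key2]
    nlinarith [mul_nonneg hBpos.le (show (0:ℝ) ≤ (m:ℝ) - 4 by linarith)]
  have hn : (0:ℝ) ≤ γ / (B * m) := by positivity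
  calc ‖T m γ s‖ * (γ / (B * m)) ≤ 1 * (γ / (B * m)) :=
        mul_le_mul_of_nonneg_right hT1 hn
    _ = γ / (B * m) := one_mul _
    _ ≤ 3/5 := hquot

lemma T_dist (hm : 4 ≤ m) (hγ : γ ∈ Icc (0:ℝ) 1) {x y : ℂ} (hx : x ∈ D m) (hy : y ∈ D m) :
    dist (T m γ x) (T m γ y) ≤ 3/5 * dist x y := by
  rw [dist_eq_norm, dist_eq_norm]
  exact Convex.norm_image_sub_le_of_norm_hasDerivWithin_le
    (fun u hu => (T_hasDerivAt hm hγ hu).hasDerivWithinAt)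
    (fun u hu => T_deriv_bound hm hγ hu) (D_convex m) hy hx

lemma T_gamma_hasDerivAt (hm : 4 ≤ m) (hγ : γ ∈ Icc (0:ℝ) 1) (hs : s ∈ D m) :
    HasDerivAt (fun t : ℝ => T m t s)
      (T m γ s * ((s - 1) / ((1 + (γ:ℂ) * (s - 1)) * (m:ℂ)))) γ := by
  obtain ⟨hz0, hslit, -⟩ := z_facts hm hγ hs
  have h1 : HasDerivAt (fun u : ℂ => 1 + u * (s - 1)) (s - 1) (γ:ℂ) := by
    simpa using ((hasDerivAt_id ((γ:ℂ))).mul_const (s - 1)).const_add 1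
  have h2 : HasDerivAt (fun u : ℂ => Complex.log (1 + u * (s - 1)))
      ((1 + (γ:ℂ) * (s - 1))⁻¹ * (s - 1)) (γ:ℂ) := by
    exact (Complex.hasDerivAt_log hslit).comp ((γ:ℂ)) h1
  have h3 := (((h2.div_const (m:ℂ)).const_add ((b1 m : ℂ) * Complex.I)).cexp).comp_ofReal
  refine h3.congr_deriv (Eq.symm ?_)
  rw [show T m γ s = Complex.exp ((b1 m : ℂ) * Complex.I
      + Complex.log (1 + (γ:ℂ) * (s - 1)) / (m:ℂ)) from rfl, inv_mul_eq_div, div_div]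

lemma T_gamma_deriv_bound (hm : 4 ≤ m) (hγ : γ ∈ Icc (0:ℝ) 1) (hs : s ∈ D m) :
    ‖T m γ s * ((s - 1) / ((1 + (γ:ℂ) * (s - 1)) * (m:ℂ)))‖ ≤ 2 := by
  obtain ⟨hz0, hslit, habsle, hq, -⟩ := z_facts hm hγ hs
  have hM := four_le hm
  have hT1 := norm_T_le_one hm hγ hs
  have hs2 : ‖s - 1‖ ≤ 2 := by
    calc ‖s - 1‖ ≤ ‖s‖ + ‖(1:ℂ)‖ := norm_sub_le s 1
      _ ≤ 1 + 1 := by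
          rw [norm_one]
          have := hs.2.2.2.2
          linarith
      _ = 2 := by norm_num
  rw [norm_mul, norm_div, norm_mul]
  have e2 : ‖((m:ℕ):ℂ)‖ = (m:ℝ) := by
    rw [Complex.norm_natCast]
  rw [e2]
  have hBpos : (0:ℝ) < ‖1 + (γ:ℂ) * (s - 1)‖ := by
    linarith
  have hden : (1:ℝ) ≤ ‖1 + (γ:ℂ) * (s - 1)‖ * m := by
    nlinarith
  have hquot : ‖s - 1‖ / (‖1 + (γ:ℂ) * (s - 1)‖ * m) ≤ 2 := by
    rw [div_le_iff₀ (by positivity)]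
    nlinarith [norm_nonneg (s - 1)]
  calc ‖T m γ s‖ * (‖s - 1‖ / (‖1 + (γ:ℂ) * (s - 1)‖ * m))
      ≤ 1 * (‖s - 1‖ / (‖1 + (γ:ℂ) * (s - 1)‖ * m)) :=
        mul_le_mul_of_nonneg_right hT1 (by positivity)
    _ = _ := one_mul _
    _ ≤ 2 := hquot

lemma T_gamma_dist (hm : 4 ≤ m) (hs : s ∈ D m) {γ₁ γ₂ : ℝ}
    (h1 : γ₁ ∈ Icc (0:ℝ) 1) (h2 : γ₂ ∈ Icc (0:ℝ) 1) :
    dist (T m γ₁ s) (T m γ₂ s) ≤ 2 * dist γ₁ γ₂ := by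
  rw [dist_eq_norm, dist_eq_norm]
  exact Convex.norm_image_sub_le_of_norm_hasDerivWithin_le
    (f := fun t : ℝ => T m t s)
    (f' := fun t : ℝ => T m t s * ((s - 1) / ((1 + (t:ℂ) * (s - 1)) * (m:ℂ))))
    (fun t ht => (T_gamma_hasDerivAt hm ht hs).hasDerivWithinAt)
    (fun t ht => T_gamma_deriv_bound hm ht hs) (convex_Icc 0 1) h2 h1

lemma pow_fixed (hm : 4 ≤ m) (hγ : γ ∈ Icc (0:ℝ) 1) (hs : s ∈ D m) (hfix : T m γ s = s) :
    s ^ m = 1 + (γ:ℂ) * (s - 1) := by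
  obtain ⟨hz0, -⟩ := z_facts hm hγ hs
  have hMne : (m:ℂ) ≠ 0 := Nat.cast_ne_zero.mpr (by omega)
  have e1 : (m:ℂ) * ((b1 m : ℂ) * Complex.I + Complex.log (1 + (γ:ℂ) * (s - 1)) / (m:ℂ))
      = 2 * (Real.pi:ℂ) * Complex.I + Complex.log (1 + (γ:ℂ) * (s - 1)) := by
    have hb : ((m:ℝ) * b1 m : ℝ) = 2 * Real.pi := by
      rw [b1]
      field_simp
    have hbC : (m:ℂ) * (b1 m : ℂ) = 2 * (Real.pi:ℂ) := by
      have := congrArg (fun r : ℝ => (r:ℂ)) hb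
      push_cast at this
      linear_combination this
    rw [mul_add]
    congr 1
    · linear_combination Complex.I * hbC
    · field_simp
  calc s ^ m = (T m γ s) ^ m := by rw [hfix]
    _ = Complex.exp ((m:ℂ) * ((b1 m : ℂ) * Complex.I
        + Complex.log (1 + (γ:ℂ) * (s - 1)) / (m:ℂ))) := (Complex.exp_nat_mul _ m).symm
    _ = Complex.exp (2 * (Real.pi:ℂ) * Complex.I)
        * Complex.exp (Complex.log (1 + (γ:ℂ) * (s - 1))) := by rw [e1, Complex.exp_add]
    _ = 1 + (γ:ℂ) * (s - 1) := by rw [Complex.exp_two_pi_mul_I, one_mul, Complex.exp_log hz0]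

lemma T_zero_eq (s : ℂ) : T m 0 s = Complex.exp ((b1 m : ℂ) * Complex.I) := by
  rw [T]
  norm_num

lemma T_one_eq (hm : 4 ≤ m) : T m 1 (Complex.exp ((b2 m : ℂ) * Complex.I))
    = Complex.exp ((b2 m : ℂ) * Complex.I) := by
  have hpi := Real.pi_pos
  have hM := four_le hm
  rw [T]
  have h1 : (1:ℂ) + ((1:ℝ):ℂ) * (Complex.exp ((b2 m:ℂ) * Complex.I) - 1)
      = Complex.exp ((b2 m:ℂ) * Complex.I) := by push_cast; ring
  rw [h1]
  have hlog : Complex.log (Complex.exp ((b2 m:ℂ) * Complex.I)) = (b2 m:ℂ) * Complex.I := by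
    apply Complex.log_exp
    · rw [ofReal_mul_I_im']
      linarith [b2_pos hm]
    · rw [ofReal_mul_I_im']
      linarith [b2_le hm]
  rw [hlog]
  congr 1
  have hid := b_identity hm
  have hC := congrArg (fun r : ℝ => (r:ℂ)) hid
  push_cast at hC
  linear_combination Complex.I * hC

end PowerArcAux

open PowerArcAux Complex Set

/-- Pointwise powers of Type I arcs, case `m = dk`: there is a continuous path of
zeros of the reduced Ito equation `(t^k − (1−γ))^d = γ^d t` joining `e^{2πi/k}` to
`e^{2πi d/(m−1)}` and staying in the corresponding sector. -/
theorem power_arc_exists_i (d k m n : ℕ) (hd : 1 < d) (hdm : d < m) (hmn : m ≤ n)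
    (hmk : m = d * k) (hn : (n : ℤ) < (m : ℤ) + (k : ℤ) - 1) :
    ∃ μ : ℝ → ℂ, ContinuousOn μ (Set.Icc (0 : ℝ) 1) ∧
      μ 0 = Complex.exp (2 * Real.pi * Complex.I / (k : ℂ)) ∧
      μ 1 = Complex.exp (2 * Real.pi * Complex.I * ((d : ℂ) / ((m : ℂ) - 1))) ∧
      ∀ γ ∈ Set.Icc (0 : ℝ) 1,
        ((μ γ ^ k - ((1 : ℂ) - (γ : ℂ))) ^ d = (γ : ℂ) ^ d * μ γ ∧
          μ γ ≠ 0 ∧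
          ∃ θ : ℝ, μ γ = (‖μ γ‖ : ℂ) * Complex.exp (θ * Complex.I) ∧
            2 * Real.pi / (k : ℝ) ≤ θ ∧ θ ≤ 2 * Real.pi * ((d : ℝ) / ((m : ℝ) - 1))) := by
  have hpi := Real.pi_pos
  have hk0 : k ≠ 0 := by rintro rfl; rw [Nat.mul_zero] at hmk; omega
  have hk1 : k ≠ 1 := by rintro rfl; rw [Nat.mul_one] at hmk; omega
  have hk2 : 2 ≤ k := by omega
  have hm4 : 4 ≤ m := by rw [hmk]; exact Nat.mul_le_mul hd hk2
  have hM := four_le hm4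
  have hdR : (0:ℝ) < (d:ℝ) := by exact_mod_cast Nat.pos_of_ne_zero (by omega)
  have hkR : (0:ℝ) < (k:ℝ) := by exact_mod_cast Nat.pos_of_ne_zero hk0
  have hdb1 : (d:ℝ) * b1 m = 2 * Real.pi / (k:ℝ) := by
    rw [b1, hmk]
    push_cast
    field_simp
  have hdb2 : (d:ℝ) * b2 m = 2 * Real.pi * ((d:ℝ) / ((m:ℝ) - 1)) := by
    rw [b2]
    ring
  have hDc : IsClosed (D m) := D_closed m
  haveI : CompleteSpace (D m) := hDc.completeSpace_coe
  haveI : Nonempty (D m) := ⟨⟨_, exp_mem hm4 le_rfl (b1_lt_b2 hm4).le⟩⟩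
  set F : Icc (0:ℝ) 1 → D m → D m :=
    fun g x => ⟨T m g x, T_mem hm4 g.2 x.2⟩ with hF
  have hcontr : ∀ g : Icc (0:ℝ) 1, ContractingWith (3/5 : NNReal) (F g) := by
    intro g
    constructor
    · rw [← NNReal.coe_lt_coe]
      norm_num
    · apply LipschitzWith.of_dist_le_mul
      intro x y
      have h := T_dist hm4 g.2 x.2 y.2
      have hc : ((3/5 : NNReal) : ℝ) = 3/5 := by norm_num
      rw [Subtype.dist_eq, Subtype.dist_eq, hc]
      exact h
  set S : Icc (0:ℝ) 1 → D m := fun g => ContractingWith.fixedPoint (F g) (hcontr g) with hS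
  have hSfix : ∀ g : Icc (0:ℝ) 1, T m g (S g) = ((S g : D m) : ℂ) := by
    intro g
    exact congrArg Subtype.val (hcontr g).fixedPoint_isFixedPt
  have hSuniq : ∀ (g : Icc (0:ℝ) 1) (x : D m), F g x = x → S g = x := by
    intro g x hx
    exact ((hcontr g).fixedPoint_unique hx).symm
  have hSdist : ∀ g₁ g₂ : Icc (0:ℝ) 1, dist (S g₁) (S g₂) ≤ 5 * dist g₁ g₂ := by
    intro g₁ g₂
    have hfg : ∀ x : D m, dist (F g₁ x) (F g₂ x) ≤ 2 * dist g₁ g₂ := by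
      intro x
      rw [Subtype.dist_eq, Subtype.dist_eq]
      exact T_gamma_dist hm4 x.2 g₁.2 g₂.2
    have h := (hcontr g₁).fixedPoint_lipschitz_in_map (hcontr g₂) hfg
    calc dist (S g₁) (S g₂) ≤ 2 * dist g₁ g₂ / (1 - ((3/5:NNReal):ℝ)) := h
      _ ≤ 5 * dist g₁ g₂ := by
          rw [show ((3/5:NNReal):ℝ) = 3/5 by norm_num]
          rw [div_le_iff₀ (by norm_num)]
          nlinarith [dist_nonneg (x := g₁) (y := g₂)]
  have hσcont : Continuous (fun x : ℝ => ((S (projIcc (0:ℝ) 1 zero_le_one x) : D m) : ℂ)) := by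
    have hlip : LipschitzWith 5 S := by
      apply LipschitzWith.of_dist_le_mul
      intro g₁ g₂
      rw [show ((5:NNReal):ℝ) = 5 by norm_num]
      exact hSdist g₁ g₂
    exact continuous_subtype_val.comp (hlip.continuous.comp continuous_projIcc)
  refine ⟨fun x => ((S (projIcc (0:ℝ) 1 zero_le_one x) : D m) : ℂ) ^ d,
    (hσcont.pow d).continuousOn, ?_, ?_, ?_⟩
  · -- value at 0
    have h0m : (0:ℝ) ∈ Icc (0:ℝ) 1 := by norm_num
    have hg0 : projIcc (0:ℝ) 1 zero_le_one 0 = ⟨0, h0m⟩ := projIcc_of_mem zero_le_one h0m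
    have hfix0 : F ⟨0, h0m⟩ ⟨Complex.exp ((b1 m:ℂ) * Complex.I),
        exp_mem hm4 le_rfl (b1_lt_b2 hm4).le⟩
        = ⟨Complex.exp ((b1 m:ℂ) * Complex.I), exp_mem hm4 le_rfl (b1_lt_b2 hm4).le⟩ := by
      apply Subtype.ext
      exact T_zero_eq _
    have hS0 := hSuniq _ _ hfix0
    beta_reduce
    rw [hg0, hS0]
    rw [← Complex.exp_nat_mul]
    congr 1
    have hC := congrArg (fun r : ℝ => (r:ℂ)) hdb1
    push_cast at hC
    linear_combination Complex.I * hC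
  · -- value at 1
    have h1m : (1:ℝ) ∈ Icc (0:ℝ) 1 := by norm_num
    have hg1 : projIcc (0:ℝ) 1 zero_le_one 1 = ⟨1, h1m⟩ := projIcc_of_mem zero_le_one h1m
    have hfix1 : F ⟨1, h1m⟩ ⟨Complex.exp ((b2 m:ℂ) * Complex.I),
        exp_mem hm4 (b1_lt_b2 hm4).le le_rfl⟩
        = ⟨Complex.exp ((b2 m:ℂ) * Complex.I), exp_mem hm4 (b1_lt_b2 hm4).le le_rfl⟩ := by
      apply Subtype.ext
      exact T_one_eq hm4
    have hS1 := hSuniq _ _ hfix1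
    beta_reduce
    rw [hg1, hS1]
    rw [← Complex.exp_nat_mul]
    congr 1
    have hC := congrArg (fun r : ℝ => (r:ℂ)) hdb2
    push_cast at hC
    linear_combination Complex.I * hC
  · intro γ hγ
    have hproj : projIcc (0:ℝ) 1 zero_le_one γ = ⟨γ, hγ⟩ := projIcc_of_mem zero_le_one hγ
    beta_reduce
    rw [hproj]
    set g : Icc (0:ℝ) 1 := ⟨γ, hγ⟩ with hg
    have hsD : ((S g : D m) : ℂ) ∈ D m := (S g).2
    have hfix : T m γ ((S g : D m) : ℂ) = ((S g : D m) : ℂ) := hSfix g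
    have hzeq : ((S g : D m) : ℂ) ^ m = 1 + (γ:ℂ) * (((S g : D m) : ℂ) - 1) :=
      pow_fixed hm4 hγ hsD hfix
    have hsne : ((S g : D m) : ℂ) ≠ 0 := ne_zero_of_mem hsD
    have harg := arg_mem_of_mem hm4 hsD
    refine ⟨?_, pow_ne_zero d hsne, (d:ℝ) * ((S g : D m) : ℂ).arg, ?_, ?_, ?_⟩
    · rw [← pow_mul, ← hmk]
      have he : ((S g : D m) : ℂ) ^ m - (1 - (γ:ℂ)) = (γ:ℂ) * ((S g : D m) : ℂ) := by
        rw [hzeq]; ring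
      rw [he, mul_pow]
    · rw [norm_pow]
      conv_lhs => rw [← Complex.norm_mul_exp_arg_mul_I ((S g : D m) : ℂ)]
      rw [mul_pow, ← Complex.exp_nat_mul, Complex.ofReal_pow]
      congr 1
      push_cast
      ring
    · calc 2 * Real.pi / (k:ℝ) = (d:ℝ) * b1 m := hdb1.symm
        _ ≤ (d:ℝ) * ((S g : D m) : ℂ).arg :=
          mul_le_mul_of_nonneg_left harg.1 (by positivity)
    · calc (d:ℝ) * ((S g : D m) : ℂ).arg ≤ (d:ℝ) * b2 m :=
          mul_le_mul_of_nonneg_left harg.2 (by positivity)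
        _ = 2 * Real.pi * ((d:ℝ) / ((m:ℝ) - 1)) := hdb2
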